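/- Let A ∈ ℝ^{n×d} be spike-free and y ∈ ℝⁿ. Then the infimum, over all widths m ∈ ℕ, hidden weights U = [u_1 … u_m] with ‖u_j‖₂ ≤ 1 for all j, and output weights w ∈ ℝ^m satisfying (AU)_+ w = y, of ‖w‖₁ equals the optimal value of the convex program: minimize ‖w₁‖₂ + ‖w₂‖₂ over w₁, w₂ ∈ ℝ^d subject to A(w₁ − w₂) = y, Aw₁ ⪰ 0 and Aw₂ ⪰ 0 entrywise (both infima taken in [0, ∞]). -/

import Mathlib

open Finset Matrix

/-- Euclidean (ℓ2) norm of a finite-dimensional real vector. -/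
noncomputable def l2norm {k : ℕ} (x : Fin k → ℝ) : ℝ := Real.sqrt (∑ i, x i ^ 2)

/-- Entrywise ReLU of a vector. -/
def reluV {k : ℕ} (x : Fin k → ℝ) : Fin k → ℝ := fun i => max (x i) 0

/-- `A` is spike-free if `{(Au)_+ : u ∈ B₂} = {Au : u ∈ B₂} ∩ ℝ₊ⁿ`. -/
def IsSpikeFree {n d : ℕ} (A : Matrix (Fin n) (Fin d) ℝ) : Prop :=
  {x : Fin n → ℝ | ∃ u, l2norm u ≤ 1 ∧ x = reluV (A.mulVec u)} =
    {x : Fin n → ℝ | ∃ u, l2norm u ≤ 1 ∧ x = A.mulVec u} ∩ {x | ∀ i, 0 ≤ x i}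

/-- Output `(AU)_+ w = ∑_j w_j (A u_j)_+` of a bias-free two-layer ReLU network. -/
noncomputable def bfOut {n d m : ℕ} (A : Matrix (Fin n) (Fin d) ℝ)
    (U : Fin m → Fin d → ℝ) (w : Fin m → ℝ) : Fin n → ℝ :=
  ∑ j, w j • fun i => max (A.mulVec (U j) i) 0

lemma l2norm_eq_norm {k : ℕ} (x : Fin k → ℝ) :
    l2norm x = ‖(WithLp.equiv 2 (Fin k → ℝ)).symm x‖ := by
  rw [EuclideanSpace.norm_eq]
  simp [l2norm, sq_abs]

lemma l2norm_nonneg {k : ℕ} (x : Fin k → ℝ) : 0 ≤ l2norm x := Real.sqrt_nonneg _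

lemma l2norm_smul {k : ℕ} (c : ℝ) (x : Fin k → ℝ) :
    l2norm (c • x) = |c| * l2norm x := by
  unfold l2norm
  have h : ∑ i, (c • x) i ^ 2 = c ^ 2 * ∑ i, x i ^ 2 := by
    rw [Finset.mul_sum]
    refine Finset.sum_congr rfl fun i _ => ?_
    simp [mul_pow]
  rw [h, Real.sqrt_mul (sq_nonneg c), Real.sqrt_sq_eq_abs]

lemma l2norm_eq_zero_iff {k : ℕ} (x : Fin k → ℝ) : l2norm x = 0 ↔ x = 0 := by
  rw [l2norm_eq_norm, norm_eq_zero]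
  constructor
  · intro h
    have := congrArg (WithLp.equiv 2 (Fin k → ℝ)) h
    simpa using this
  · intro h; simp [h]

lemma l2norm_sum_le {k m : ℕ} (f : Fin m → Fin k → ℝ) :
    l2norm (∑ j, f j) ≤ ∑ j, l2norm (f j) := by
  simp only [l2norm_eq_norm]
  have h : (WithLp.equiv 2 (Fin k → ℝ)).symm (∑ j, f j)
      = ∑ j, (WithLp.equiv 2 (Fin k → ℝ)).symm (f j) :=
    WithLp.toLp_sum _ _ _ _
  rw [h]
  exact norm_sum_le _ _

lemma max_sub_max_neg (a : ℝ) : max a 0 - max (-a) 0 = a := by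
  rcases le_total 0 a with h | h
  · rw [max_eq_left h, max_eq_right (neg_nonpos.mpr h)]; ring
  · rw [max_eq_right h, max_eq_left (neg_nonneg.mpr h)]; ring

lemma abs_eq_max_add_max (a : ℝ) : |a| = max a 0 + max (-a) 0 := by
  rcases le_total 0 a with h | h
  · rw [abs_of_nonneg h, max_eq_left h, max_eq_right (neg_nonpos.mpr h)]; ring
  · rw [abs_of_nonpos h, max_eq_right h, max_eq_left (neg_nonneg.mpr h)]; ring

/-- For a spike-free data matrix, the non-convex minimal ℓ1-norm interpolation problem
equals the convex program `min ‖w₁‖₂ + ‖w₂‖₂ s.t. A(w₁ - w₂) = y, Aw₁ ⪰ 0, Aw₂ ⪰ 0`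
(infima in `[0,∞]`). -/
theorem stmt11 {n d : ℕ} (A : Matrix (Fin n) (Fin d) ℝ) (hA : IsSpikeFree A)
    (y : Fin n → ℝ) :
    sInf {r : ENNReal | ∃ (m : ℕ) (U : Fin m → Fin d → ℝ) (w : Fin m → ℝ),
        (∀ j, l2norm (U j) ≤ 1) ∧ bfOut A U w = y ∧
        r = ENNReal.ofReal (∑ j, |w j|)} =
    sInf {r : ENNReal | ∃ w1 w2 : Fin d → ℝ,
        A.mulVec (w1 - w2) = y ∧ (∀ i, 0 ≤ A.mulVec w1 i) ∧ (∀ i, 0 ≤ A.mulVec w2 i) ∧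
        r = ENNReal.ofReal (l2norm w1 + l2norm w2)} := by
  have mvsum : ∀ {m : ℕ} (g : Fin m → Fin d → ℝ),
      A.mulVec (∑ j, g j) = ∑ j, A.mulVec (g j) := by
    intro m g
    simp only [← Matrix.mulVecLin_apply]
    exact map_sum (Matrix.mulVecLin A) g Finset.univ
  apply le_antisymm
  · -- nonconvex inf ≤ convex inf
    refine le_sInf ?_
    rintro r ⟨w1, w2, hy, h1, h2, rfl⟩
    set a := l2norm w1 with ha
    set b := l2norm w2 with hb
    have cancel : ∀ x : Fin d → ℝ, l2norm x • (l2norm x)⁻¹ • A.mulVec x = A.mulVec x := by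
      intro x
      by_cases h : l2norm x = 0
      · have hx : x = 0 := (l2norm_eq_zero_iff x).mp h
        simp [hx, h]
      · rw [smul_smul, mul_inv_cancel₀ h, one_smul]
    have unorm : ∀ x : Fin d → ℝ, l2norm ((l2norm x)⁻¹ • x) ≤ 1 := by
      intro x
      rw [l2norm_smul, abs_of_nonneg (inv_nonneg.mpr (l2norm_nonneg x))]
      by_cases h : l2norm x = 0
      · simp [h]
      · rw [inv_mul_cancel₀ h]
    have relu_eq : ∀ (x : Fin d → ℝ), (∀ i, 0 ≤ A.mulVec x i) →
        (fun i => max (A.mulVec ((l2norm x)⁻¹ • x) i) 0) = (l2norm x)⁻¹ • A.mulVec x := by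
      intro x hx
      funext i
      rw [Matrix.mulVec_smul]
      have : 0 ≤ ((l2norm x)⁻¹ • A.mulVec x) i := by
        have : (0:ℝ) ≤ (l2norm x)⁻¹ * A.mulVec x i :=
          mul_nonneg (inv_nonneg.mpr (l2norm_nonneg x)) (hx i)
        simpa using this
      exact max_eq_left this
    refine le_trans (sInf_le ?_) le_rfl
    refine ⟨2, ![(l2norm w1)⁻¹ • w1, (l2norm w2)⁻¹ • w2], ![a, -b], ?_, ?_, ?_⟩
    · intro j
      fin_cases j
      · simpa using unorm w1
      · simpa using unorm w2
    · unfold bfOut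
      rw [Fin.sum_univ_two]
      simp only [Matrix.cons_val_zero, Matrix.cons_val_one, Matrix.head_cons]
      rw [relu_eq w1 h1, relu_eq w2 h2]
      rw [show (-b) • ((l2norm w2)⁻¹ • A.mulVec w2) = -(b • (l2norm w2)⁻¹ • A.mulVec w2)
        from neg_smul b _]
      rw [ha, hb, cancel w1, cancel w2, ← sub_eq_add_neg, ← Matrix.mulVec_sub]
      exact hy
    · rw [Fin.sum_univ_two]
      simp only [Matrix.cons_val_zero, Matrix.cons_val_one, Matrix.head_cons, abs_neg]
      rw [abs_of_nonneg (l2norm_nonneg w1), abs_of_nonneg (l2norm_nonneg w2)]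
  · -- convex inf ≤ nonconvex inf
    refine le_sInf ?_
    rintro r ⟨m, U, w, hU, hout, rfl⟩
    have hmem : ∀ j, reluV (A.mulVec (U j)) ∈
        ({x : Fin n → ℝ | ∃ u, l2norm u ≤ 1 ∧ x = A.mulVec u} ∩ {x | ∀ i, 0 ≤ x i}) := by
      intro j
      rw [← hA]
      exact ⟨U j, hU j, rfl⟩
    choose v hv1 hv2 using fun j => (hmem j).1
    have hpos : ∀ j i, 0 ≤ A.mulVec (v j) i := by
      intro j i
      rw [← hv2 j]
      exact le_max_right _ _
    set p : Fin m → ℝ := fun j => max (w j) 0 with hp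
    set q : Fin m → ℝ := fun j => max (-(w j)) 0 with hq
    have hpn : ∀ j, 0 ≤ p j := fun j => le_max_right _ _
    have hqn : ∀ j, 0 ≤ q j := fun j => le_max_right _ _
    set w1 : Fin d → ℝ := ∑ j, p j • v j with hw1
    set w2 : Fin d → ℝ := ∑ j, q j • v j with hw2
    have hAw1 : A.mulVec w1 = ∑ j, p j • A.mulVec (v j) := by
      rw [hw1, mvsum]
      exact Finset.sum_congr rfl fun j _ => Matrix.mulVec_smul A (p j) (v j)
    have hAw2 : A.mulVec w2 = ∑ j, q j • A.mulVec (v j) := by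
      rw [hw2, mvsum]
      exact Finset.sum_congr rfl fun j _ => Matrix.mulVec_smul A (q j) (v j)
    have hpos1 : ∀ i, 0 ≤ A.mulVec w1 i := by
      intro i
      rw [hAw1]
      rw [Finset.sum_apply]
      exact Finset.sum_nonneg fun j _ => mul_nonneg (hpn j) (hpos j i)
    have hpos2 : ∀ i, 0 ≤ A.mulVec w2 i := by
      intro i
      rw [hAw2]
      rw [Finset.sum_apply]
      exact Finset.sum_nonneg fun j _ => mul_nonneg (hqn j) (hpos j i)
    have hfeas : A.mulVec (w1 - w2) = y := by
      rw [Matrix.mulVec_sub, hAw1, hAw2, ← Finset.sum_sub_distrib]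
      have : ∀ j, p j • A.mulVec (v j) - q j • A.mulVec (v j) = w j • A.mulVec (v j) := by
        intro j
        rw [← sub_smul]
        congr 1
        exact max_sub_max_neg (w j)
      rw [Finset.sum_congr rfl fun j _ => this j]
      rw [← hout]
      unfold bfOut
      refine Finset.sum_congr rfl fun j _ => ?_
      rw [← hv2 j]
      rfl
    have hnb1 : l2norm w1 ≤ ∑ j, p j := by
      calc l2norm w1 ≤ ∑ j, l2norm (p j • v j) := l2norm_sum_le _
        _ ≤ ∑ j, p j := by
            refine Finset.sum_le_sum fun j _ => ?_
            rw [l2norm_smul, abs_of_nonneg (hpn j)]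
            calc p j * l2norm (v j) ≤ p j * 1 :=
                  mul_le_mul_of_nonneg_left (hv1 j) (hpn j)
              _ = p j := mul_one _
    have hnb2 : l2norm w2 ≤ ∑ j, q j := by
      calc l2norm w2 ≤ ∑ j, l2norm (q j • v j) := l2norm_sum_le _
        _ ≤ ∑ j, q j := by
            refine Finset.sum_le_sum fun j _ => ?_
            rw [l2norm_smul, abs_of_nonneg (hqn j)]
            calc q j * l2norm (v j) ≤ q j * 1 :=
                  mul_le_mul_of_nonneg_left (hv1 j) (hqn j)
              _ = q j := mul_one _
    have hbound : l2norm w1 + l2norm w2 ≤ ∑ j, |w j| := by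
      have : ∑ j, |w j| = ∑ j, p j + ∑ j, q j := by
        rw [← Finset.sum_add_distrib]
        exact Finset.sum_congr rfl fun j _ => abs_eq_max_add_max (w j)
      rw [this]
      exact add_le_add hnb1 hnb2
    exact le_trans (sInf_le ⟨w1, w2, hfeas, hpos1, hpos2, rfl⟩)
      (ENNReal.ofReal_le_ofReal hbound)
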